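/- Every complex Hilbert space H (of arbitrary density character) has the SHAI property: for every nonzero Banach space Y, every surjective algebra homomorphism ψ : B(H) → B(Y) is injective. -/

import Mathlib

open Function ContinuousLinearMap
universe u
set_option maxHeartbeats 4000000
set_option synthInstance.maxHeartbeats 400000

noncomputable section

namespace HilbertSHAI

variable {H : Type*} [NormedAddCommGroup H] [InnerProductSpace ℂ H] [CompleteSpace H]

local notation "⟪" x ", " y "⟫" => @inner ℂ _ _ x y

theorem exists_star_factor (T : H →L[ℂ] H) :
    ∃ U : H →L[ℂ] H, star T = star U * T * star U := by
  classical
  set a : H →L[ℂ] H := CFC.sqrt (star T * T) with ha_def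
  have ha_nonneg : (0 : H →L[ℂ] H) ≤ a := CFC.sqrt_nonneg _
  have ha_sa : IsSelfAdjoint a := IsSelfAdjoint.of_nonneg ha_nonneg
  have ha_sq : a * a = star T * T := CFC.sqrt_mul_sqrt_self _ (star_mul_self_nonneg T)
  have hsym : ∀ u v : H, ⟪a u, v⟫ = ⟪u, a v⟫ := by
    intro u v
    conv_lhs => rw [← ha_sa.adjoint_eq]
    exact adjoint_inner_left a v u
  have hinner_eq : ∀ x : H, ⟪a x, a x⟫ = ⟪T x, T x⟫ := by
    intro x
    have h1 : ⟪a x, a x⟫ = ⟪x, (a * a) x⟫ := by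
      rw [hsym x (a x)]; rfl
    have h2 : ⟪x, (star T * T) x⟫ = ⟪T x, T x⟫ := by
      have : (star T * T) x = adjoint T (T x) := by
        rw [star_eq_adjoint]; rfl
      rw [this, adjoint_inner_right]
    rw [h1, ha_sq, h2]
  have hnorm : ∀ x : H, ‖a x‖ = ‖T x‖ := by
    intro x
    rw [norm_eq_sqrt_re_inner (𝕜 := ℂ) (a x), norm_eq_sqrt_re_inner (𝕜 := ℂ) (T x), hinner_eq x]
  have hker : ∀ x y : H, a x = a y → T x = T y := by
    intro x y hxy
    have : ‖T x - T y‖ = 0 := by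
      rw [← map_sub, ← hnorm, map_sub, hxy, sub_self, norm_zero]
    exact sub_eq_zero.mp (norm_eq_zero.mp this)
  -- the (non-closed) range of `a` and its closure
  set N : Submodule ℂ H := LinearMap.range (a : H →ₗ[ℂ] H) with hN_def
  set M : Submodule ℂ H := N.topologicalClosure with hM_def
  haveI : CompleteSpace M := (Submodule.isClosed_topologicalClosure N).completeSpace_coe
  have haN : ∀ x : H, a x ∈ N := fun x => LinearMap.mem_range.mpr ⟨x, rfl⟩
  have hNM : N ≤ M := Submodule.le_topologicalClosure N
  -- a right inverse of `a` on its range, by choice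
  have hex : ∀ s : N, ∃ x : H, a x = (s : H) := fun s => LinearMap.mem_range.mp s.2
  set sec : N → H := fun s => Classical.choose (hex s) with hsec_def
  have hsec : ∀ s : N, a (sec s) = (s : H) := fun s => Classical.choose_spec (hex s)
  -- the densely defined partial isometry
  set u₀ : N →ₗ[ℂ] H :=
    { toFun := fun s => T (sec s)
      map_add' := by
        intro s t
        show T (sec (s + t)) = T (sec s) + T (sec t)
        rw [← map_add]
        apply hker
        rw [map_add, hsec, hsec, hsec, Submodule.coe_add]
      map_smul' := by
        intro c s
        show T (sec (c • s)) = c • T (sec s)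
        rw [← map_smul]
        apply hker
        rw [map_smul, hsec, hsec, Submodule.coe_smul] } with hu₀_def
  have hu₀_apply : ∀ s : N, u₀ s = T (sec s) := fun s => rfl
  have hu₀_norm : ∀ s : N, ‖u₀ s‖ = ‖s‖ := by
    intro s
    rw [hu₀_apply, ← hnorm, hsec]
    rfl
  set uc : N →L[ℂ] H := u₀.mkContinuous 1 (fun s => by rw [hu₀_norm, one_mul]) with huc_def
  have huc_apply : ∀ s : N, uc s = T (sec s) := fun s => rfl
  -- the inclusion of `N` into `M`
  set e : N →L[ℂ] M := (Submodule.inclusion hNM).mkContinuous 1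
    (fun s => by rw [one_mul]; rfl) with he_def
  have he_apply : ∀ s : N, ((e s : M) : H) = (s : H) := fun s => rfl
  have he_norm : ∀ s : N, ‖e s‖ = ‖s‖ := fun s => rfl
  have h_e : IsUniformInducing e :=
    (AddMonoidHomClass.isometry_of_norm e he_norm).isUniformInducing
  have h_dense : DenseRange e := by
    intro m
    have hm : (m : H) ∈ closure (N : Set H) := by
      have h2 : (m : H) ∈ (N.topologicalClosure : Set H) := m.2
      rwa [Submodule.topologicalClosure_coe] at h2
    rw [mem_closure_iff_seq_limit] at hm
    obtain ⟨x, hxN, hx_lim⟩ := hm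
    rw [mem_closure_iff_seq_limit]
    refine ⟨fun n => e ⟨x n, hxN n⟩, fun n => ⟨_, rfl⟩, ?_⟩
    rw [tendsto_subtype_rng]
    exact hx_lim
  set U₁ : M →L[ℂ] H := uc.extend e with hU₁_def
  have hU₁e : ∀ s : N, U₁ (e s) = uc s := fun s => ContinuousLinearMap.extend_eq uc h_dense h_e s
  have hU₁iso : ∀ m : M, ‖U₁ m‖ = ‖m‖ := by
    have hcl : IsClosed {m : M | ‖U₁ m‖ = ‖m‖} :=
      isClosed_eq (continuous_norm.comp U₁.continuous) continuous_norm
    intro m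
    refine h_dense.induction_on m hcl fun s => ?_
    show ‖U₁ (e s)‖ = ‖e s‖
    rw [hU₁e, he_norm]
    exact hu₀_norm s
  set Li : M →ₗᵢ[ℂ] H := ⟨(U₁ : M →ₗ[ℂ] H), hU₁iso⟩ with hLi_def
  have hLi_apply : ∀ m : M, Li m = U₁ m := fun m => rfl
  set P : H →L[ℂ] M := M.orthogonalProjectionOnto with hP_def
  set U : H →L[ℂ] H := U₁.comp P with hU_def
  -- U ∘ a = T
  have hUa : ∀ x : H, U (a x) = T x := by
    intro x
    have h1 : P (a x) = ⟨a x, hNM (haN x)⟩ := by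
      rw [hP_def]
      exact Submodule.orthogonalProjectionOnto_mem_subspace_eq_self (⟨a x, hNM (haN x)⟩ : M)
    have h2 : (⟨a x, hNM (haN x)⟩ : M) = e ⟨a x, haN x⟩ := rfl
    rw [hU_def, ContinuousLinearMap.comp_apply, h1, h2, hU₁e, huc_apply]
    exact hker _ _ (by rw [hsec])
  have hUaT : U * a = T := by ext x; exact hUa x
  -- star U * U is the orthogonal projection onto M
  have hUU : ∀ x : H, (star U * U) x = ((P x : M) : H) := by
    intro x
    apply ext_inner_right ℂ
    intro y
    have h1 : ⟪(star U * U) x, y⟫ = ⟪U x, U y⟫ := by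
      show ⟪(adjoint U) (U x), y⟫ = _
      rw [adjoint_inner_left]
    have h2 : ⟪U x, U y⟫ = ⟪(P x : H), (P y : H)⟫ := by
      have := Li.inner_map_map (P x) (P y)
      rw [hLi_apply, hLi_apply] at this
      rw [hU_def]
      show ⟪U₁ (P x), U₁ (P y)⟫ = _
      rw [this]
      rfl
    have h3 : ⟪(P x : H), (P y : H)⟫ = ⟪(P x : H), y⟫ := by
      have horth : y - (P y : H) ∈ Mᗮ := Submodule.sub_starProjection_mem_orthogonal y
      have : ⟪(P x : H), y - (P y : H)⟫ = 0 :=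
        (Submodule.mem_orthogonal M _).mp horth (P x : H) (P x).2
      have hsplit : ⟪(P x : H), y⟫ = ⟪(P x : H), (P y : H)⟫ + ⟪(P x : H), y - (P y : H)⟫ := by
        rw [← inner_add_right]
        congr 1
        abel
      rw [hsplit, this, add_zero]
    rw [h1, h2, h3]
  -- star U * T = a
  have hstarUT : star U * T = a := by
    ext x
    have h1 : (star U * T) x = (star U * U) (a x) := by
      show (star U) (T x) = (star U) (U (a x))
      rw [hUa x]
    rw [h1, hUU]
    have : P (a x) = ⟨a x, hNM (haN x)⟩ :=
      Submodule.orthogonalProjectionOnto_mem_subspace_eq_self (⟨a x, hNM (haN x)⟩ : M)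
    rw [this]
  refine ⟨U, ?_⟩
  calc star T = star (U * a) := by rw [hUaT]
    _ = star a * star U := by rw [star_mul]
    _ = a * star U := by rw [ha_sa.star_eq]
    _ = (star U * T) * star U := by rw [hstarUT]
    _ = star U * T * star U := rfl

theorem main {Y : Type u} [NormedAddCommGroup Y] [NormedSpace ℂ Y] [CompleteSpace Y]
    (hY : Nontrivial Y) (ψ : (H →L[ℂ] H) →ₐ[ℂ] (Y →L[ℂ] Y)) (hsurj : Surjective ψ) :
    Injective ψ := by
  rw [injective_iff_map_eq_zero]
  intro T0 hT0
  by_contra hT0ne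
  -- a nonzero vector in Y and a dual functional
  obtain ⟨y₀, hy₀⟩ := exists_ne (0 : Y)
  obtain ⟨g₀, hg₀norm, hg₀⟩ := exists_dual_vector ℂ y₀ (norm_ne_zero_iff.mpr hy₀)
  set gg : Y →L[ℂ] ℂ := ((‖y₀‖ : ℂ))⁻¹ • g₀ with hgg_def
  have hggy₀ : gg y₀ = 1 := by
    rw [hgg_def]
    simp only [ContinuousLinearMap.smul_apply, hg₀, smul_eq_mul]
    exact inv_mul_cancel₀ (by exact_mod_cast norm_ne_zero_iff.mpr hy₀)
  clear_value gg
  -- the minimal idempotent e in B(Y)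
  set e : Y →L[ℂ] Y := gg.smulRight y₀ with he_def
  have he_app : ∀ y : Y, e y = gg y • y₀ := fun y => rfl
  have hece : ∀ b : Y →L[ℂ] Y, e * b * e = gg (b y₀) • e := by
    intro b
    ext y
    show e (b (e y)) = (gg (b y₀) • e) y
    rw [he_app y, map_smul, map_smul, he_app (b y₀)]
    simp only [ContinuousLinearMap.smul_apply, he_app, smul_smul]
    rw [mul_comm]
  have hee : e * e = e := by
    have := hece 1
    rwa [mul_one, ContinuousLinearMap.one_apply, hggy₀, one_smul] at this
  have hene : e ≠ 0 := by
    intro h0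
    apply hy₀
    have : e y₀ = 0 := by rw [h0]; rfl
    rwa [he_app, hggy₀, one_smul] at this
  clear_value e
  -- rank one operators are killed by ψ
  have hv₀ : ∃ v₀ : H, T0 v₀ ≠ 0 := by
    by_contra hc
    push_neg at hc
    exact hT0ne (by ext x; exact hc x)
  obtain ⟨v₀, hv₀⟩ := hv₀
  have hrank1 : ∀ v : H, ψ ((innerSL ℂ v).smulRight v) = 0 := by
    intro v
    set c : ℂ := ((‖T0 v₀‖ : ℂ) ^ 2)⁻¹ with hc_def
    set S : H →L[ℂ] H := c • (innerSL ℂ (T0 v₀)).smulRight v with hS_def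
    set R : H →L[ℂ] H := (innerSL ℂ v).smulRight v₀ with hR_def
    have hfact : S * T0 * R = (innerSL ℂ v).smulRight v := by
      ext x
      show S (T0 (R x)) = ⟪v, x⟫ • v
      have hRx : R x = ⟪v, x⟫ • v₀ := rfl
      rw [hRx, map_smul, map_smul]
      congr 1
      show c • (⟪T0 v₀, T0 v₀⟫ • v) = v
      have hs : c * ⟪T0 v₀, T0 v₀⟫ = 1 := by
        rw [hc_def, inner_self_eq_norm_sq_to_K]
        apply inv_mul_cancel₀
        exact pow_ne_zero _ (Complex.ofReal_ne_zero.mpr (norm_ne_zero_iff.mpr hv₀))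
      rw [smul_smul, hs, one_smul]
    rw [← hfact, map_mul, map_mul, hT0, mul_zero, zero_mul]
  -- the kernel of ψ is star-closed
  have hstar_ker : ∀ T : H →L[ℂ] H, ψ T = 0 → ψ (star T) = 0 := by
    intro T hT
    obtain ⟨U, hU⟩ := exists_star_factor T
    rw [hU, map_mul, map_mul, hT, mul_zero, zero_mul]
  -- a preimage of e
  obtain ⟨p, hp⟩ := hsurj e
  set Ep : Y →L[ℂ] Y := ψ (star p) with hEp_def
  clear_value Ep
  have hEp2 : Ep * Ep = Ep := by
    have h0 : ψ (p * p - p) = 0 := by rw [map_sub, map_mul, hp, hee, sub_self]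
    have h1 : ψ (star (p * p - p)) = 0 := hstar_ker _ h0
    rw [star_sub, star_mul] at h1
    rw [map_sub, map_mul] at h1
    rw [hEp_def]
    rwa [sub_eq_zero] at h1
  -- the invertible element z
  set d : H →L[ℂ] H := star p - p with hd_def
  set z : H →L[ℂ] H := 1 + star d * d with hz_def
  have hz : IsUnit z := by
    apply isUnit_of_forall_le_norm_inner_map z (c := 1) one_pos
    intro x
    have h1 : ⟪z x, x⟫ = ⟪x, x⟫ + ⟪d x, d x⟫ := by
      have : z x = x + (star d) (d x) := rfl
      rw [this, inner_add_left]
      congr 1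
      rw [star_eq_adjoint, adjoint_inner_left]
    have hre : RCLike.re ⟪z x, x⟫ = ‖x‖ ^ 2 + ‖d x‖ ^ 2 := by
      rw [h1, map_add, @inner_self_eq_norm_sq ℂ, @inner_self_eq_norm_sq ℂ]
    have hle : RCLike.re ⟪z x, x⟫ ≤ ‖⟪z x, x⟫‖ := RCLike.re_le_norm _
    rw [hre] at hle
    rw [NNReal.coe_one, mul_one]
    nlinarith [sq_nonneg ‖d x‖]
  set zi : H →L[ℂ] H := ↑hz.unit⁻¹ with hzi_def
  have hzzi : z * zi = 1 := hz.mul_val_inv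
  have hziz : zi * z = 1 := hz.val_inv_mul
  have hstarz : star z = z := by
    rw [hz_def, star_add, star_one, star_mul, star_star]
  have hstarzi : star zi = zi := by
    have h1 : star zi * z = 1 := by
      have := congrArg star hzzi
      rwa [star_mul, hstarz, star_one] at this
    calc star zi = star zi * (z * zi) := by rw [hzzi, mul_one]
      _ = (star zi * z) * zi := by rw [mul_assoc]
      _ = zi := by rw [h1, one_mul]
  clear_value zi
  -- images downstairs
  set Z : Y →L[ℂ] Y := ψ z with hZ_def
  set Zi : Y →L[ℂ] Y := ψ zi with hZi_def
  have hZZi : Z * Zi = 1 := by rw [hZ_def, hZi_def, ← map_mul, hzzi, map_one]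
  have hZiZ : Zi * Z = 1 := by rw [hZ_def, hZi_def, ← map_mul, hziz, map_one]
  have hZ_expand : Z = 1 + (e * Ep - e - Ep + Ep * e) := by
    have hsd : star d = p - star p := by rw [hd_def, star_sub, star_star]
    have h1 : Z = 1 + (ψ (star d)) * (ψ d) := by
      rw [hZ_def, hz_def, map_add, map_one, map_mul]
    have h2 : ψ (star d) = e - Ep := by rw [hsd, map_sub, hp, ← hEp_def]
    have h3 : ψ d = Ep - e := by rw [hd_def, map_sub, hp, ← hEp_def]
    rw [h1, h2, h3]
    have expand : (e - Ep) * (Ep - e) = e * Ep - e * e - Ep * Ep + Ep * e := by noncomm_ring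
    rw [expand, hee, hEp2]
  clear_value Z Zi
  have hZe : Z * e = e * Ep * e := by
    calc Z * e = e + e * Ep * e - e * e - Ep * e + Ep * (e * e) := by
          rw [hZ_expand]; noncomm_ring
      _ = e * Ep * e := by rw [hee]; abel
  have heZ : e * Z = e * Ep * e := by
    calc e * Z = e + (e * e) * Ep - e * e - e * Ep + e * Ep * e := by
          rw [hZ_expand]; noncomm_ring
      _ = e * Ep * e := by rw [hee]; abel
  have hcommZe : Z * e = e * Z := by rw [hZe, heZ]
  have hZEp : Z * Ep = Ep * e * Ep := by
    calc Z * Ep = Ep + e * (Ep * Ep) - e * Ep - Ep * Ep + Ep * e * Ep := by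
          rw [hZ_expand]; noncomm_ring
      _ = Ep * e * Ep := by rw [hEp2]; abel
  have hEpZ : Ep * Z = Ep * e * Ep := by
    calc Ep * Z = Ep + Ep * e * Ep - Ep * e - Ep * Ep + (Ep * Ep) * e := by
          rw [hZ_expand]; noncomm_ring
      _ = Ep * e * Ep := by rw [hEp2]; abel
  have hcommZEp : Z * Ep = Ep * Z := by rw [hZEp, hEpZ]
  have hcommZie : Zi * e = e * Zi := by
    calc Zi * e = Zi * e * (Z * Zi) := by rw [hZZi, mul_one]
      _ = Zi * (e * Z) * Zi := by noncomm_ring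
      _ = Zi * (Z * e) * Zi := by rw [hcommZe]
      _ = (Zi * Z) * (e * Zi) := by noncomm_ring
      _ = e * Zi := by rw [hZiZ, one_mul]
  have hcommZiEp : Zi * Ep = Ep * Zi := by
    calc Zi * Ep = Zi * Ep * (Z * Zi) := by rw [hZZi, mul_one]
      _ = Zi * (Ep * Z) * Zi := by noncomm_ring
      _ = Zi * (Z * Ep) * Zi := by rw [hcommZEp]
      _ = (Zi * Z) * (Ep * Zi) := by noncomm_ring
      _ = Ep * Zi := by rw [hZiZ, one_mul]
  -- the idempotent V
  set V : Y →L[ℂ] Y := e * Ep * Zi with hV_def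
  clear_value V
  have hVe : V * e = e := by
    calc V * e = e * Ep * (Zi * e) := by rw [hV_def]; noncomm_ring
      _ = e * Ep * (e * Zi) := by rw [hcommZie]
      _ = (e * Ep * e) * Zi := by noncomm_ring
      _ = (Z * e) * Zi := by rw [hZe]
      _ = (e * Z) * Zi := by rw [hcommZe]
      _ = e * (Z * Zi) := by rw [mul_assoc]
      _ = e := by rw [hZZi, mul_one]
  have hVsq : V * V = V := by
    calc V * V = e * Ep * (Zi * e) * Ep * Zi := by rw [hV_def]; noncomm_ring
      _ = e * Ep * (e * Zi) * Ep * Zi := by rw [hcommZie]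
      _ = e * Ep * e * (Zi * Ep) * Zi := by noncomm_ring
      _ = e * Ep * e * (Ep * Zi) * Zi := by rw [hcommZiEp]
      _ = ((e * Ep * e) * Ep) * (Zi * Zi) := by noncomm_ring
      _ = ((Z * e) * Ep) * (Zi * Zi) := by rw [hZe]
      _ = ((e * Z) * Ep) * (Zi * Zi) := by rw [hcommZe]
      _ = (e * (Z * Ep)) * (Zi * Zi) := by rw [mul_assoc e Z Ep]
      _ = (e * (Ep * Z)) * (Zi * Zi) := by rw [hcommZEp]
      _ = e * Ep * ((Z * Zi) * Zi) := by noncomm_ring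
      _ = V := by rw [hZZi, one_mul, hV_def, mul_assoc]
  have hVne : V ≠ 0 := by
    intro h0
    apply hene
    rw [← hVe, h0, zero_mul]
  -- the positive preimage k of V
  set w : H →L[ℂ] H := p * star p * zi with hw_def
  clear_value w
  have hψw : ψ w = V := by
    rw [hw_def, map_mul, map_mul, hp, ← hEp_def, ← hZi_def, hV_def]
  have hψsw : ψ (star w) = V := by
    have h1 : star w = zi * (p * star p) := by
      rw [hw_def, star_mul, star_mul, star_star, hstarzi]

    rw [h1, map_mul, map_mul, hp, ← hEp_def, ← hZi_def]
    calc Zi * (e * Ep) = (Zi * e) * Ep := by rw [mul_assoc]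
      _ = (e * Zi) * Ep := by rw [hcommZie]
      _ = e * (Zi * Ep) := by rw [mul_assoc]
      _ = e * (Ep * Zi) := by rw [hcommZiEp]
      _ = V := by rw [hV_def, mul_assoc]
  set h : H →L[ℂ] H := (2⁻¹ : ℂ) • (w + star w) with hh_def
  clear_value h
  have hh_sa : IsSelfAdjoint h := by
    rw [IsSelfAdjoint, hh_def, star_smul, star_add, star_star]
    rw [show star (2⁻¹ : ℂ) = (2⁻¹ : ℂ) by simp]
    rw [add_comm]
  have hψh : ψ h = V := by
    rw [hh_def, map_smul, map_add, hψw, hψsw, ← two_smul ℂ V, smul_smul]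
    norm_num
  set k : H →L[ℂ] H := h * h with hk_def
  clear_value k
  have hψk : ψ k = V := by rw [hk_def, map_mul, hψh, hVsq]
  have hk_nonneg : (0 : H →L[ℂ] H) ≤ k := by
    have := star_mul_self_nonneg h
    rwa [hh_sa.star_eq, ← hk_def] at this
  have hk_sa : IsSelfAdjoint k := IsSelfAdjoint.of_nonneg hk_nonneg
  -- minimality of V
  have hmin : ∀ b : Y →L[ℂ] Y, V * b * V = gg ((Ep * Zi * b) y₀) • V := by
    intro b
    calc V * b * V = (e * (Ep * Zi * b) * e) * (Ep * Zi) := by rw [hV_def]; noncomm_ring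
      _ = (gg ((Ep * Zi * b) y₀) • e) * (Ep * Zi) := by rw [hece]
      _ = gg ((Ep * Zi * b) y₀) • (e * (Ep * Zi)) := by rw [smul_mul_assoc]
      _ = gg ((Ep * Zi * b) y₀) • V := by rw [hV_def, mul_assoc e Ep Zi]
  have hcorner : ∀ a : H →L[ℂ] H, ψ (k * a * k) = gg ((Ep * Zi * ψ a) y₀) • V := by
    intro a
    rw [map_mul, map_mul, hψk]
    exact hmin (ψ a)
  -- the two cases
  by_cases hA : ∃ f : ℝ → ℝ, Continuous f ∧ (∀ t : ℝ, t ≤ (8 : ℝ)⁻¹ → f t = 0) ∧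
      ψ (cfc f k) ≠ 0
  · -- Case A
    obtain ⟨f, hfc, hf0, hfψ⟩ := hA
    set x : H →L[ℂ] H := cfc f k with hx_def
    set gA : ℝ → ℝ := fun t => (max t (8 : ℝ)⁻¹)⁻¹ with hgA_def
    have hgAden : ∀ t : ℝ, max t (8 : ℝ)⁻¹ ≠ 0 := fun t =>
      ne_of_gt (lt_of_lt_of_le (by norm_num) (le_max_right _ _))
    have hgAc : Continuous gA := (continuous_id.max continuous_const).inv₀ hgAden
    have hfg : ∀ t : ℝ, (gA t * t) * f t = f t := by
      intro t
      by_cases ht : t ≤ (8 : ℝ)⁻¹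
      · rw [hf0 t ht]; ring
      · push_neg at ht
        have hmax : max t (8 : ℝ)⁻¹ = t := max_eq_left ht.le
        have htne : t ≠ 0 := by
          have : (0 : ℝ) < t := lt_trans (by norm_num) ht
          exact ne_of_gt this
        simp only [hgA_def, hmax]
        field_simp
    set RA : H →L[ℂ] H := cfc gA k with hRA_def
    have hkid : k = cfc (fun t : ℝ => t) k := (cfc_id' ℝ k).symm
    have hRk : RA * k = cfc (fun t : ℝ => gA t * t) k := by
      rw [hRA_def]
      nth_rewrite 2 [hkid]
      exact (cfc_mul gA (fun t : ℝ => t) k (hgAc.continuousOn)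
        (Continuous.continuousOn (by exact continuous_id))).symm
    have hkR : k * RA = cfc (fun t : ℝ => t * gA t) k := by
      rw [hRA_def]
      nth_rewrite 1 [hkid]
      exact (cfc_mul (fun t : ℝ => t) gA k (Continuous.continuousOn (by exact continuous_id))
        (hgAc.continuousOn)).symm
    have hRkx : (RA * k) * x = x := by
      rw [hRk, hx_def,
        ← cfc_mul _ _ k (Continuous.continuousOn (by exact hgAc.mul continuous_id))
          (hfc.continuousOn)]
      exact cfc_congr fun t _ => hfg t
    have hkRx : (k * RA) * x = x := by
      rw [hkR, hx_def,
        ← cfc_mul _ _ k (Continuous.continuousOn (by exact continuous_id.mul hgAc))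
          (hfc.continuousOn)]
      refine cfc_congr fun t _ => ?_
      rw [show (fun t : ℝ => t * gA t) t * f t = (gA t * t) * f t by ring]
      exact hfg t
    -- the closed subspace M and its projection Q
    set NN : Submodule ℂ H := LinearMap.range (x : H →ₗ[ℂ] H) with hNN_def
    set M : Submodule ℂ H := NN.topologicalClosure with hM_def
    haveI hMcomplete : CompleteSpace M :=
      (Submodule.isClosed_topologicalClosure NN).completeSpace_coe
    have hxM : ∀ y : H, x y ∈ M := fun y =>
      (Submodule.le_topologicalClosure NN) (LinearMap.mem_range.mpr ⟨y, rfl⟩)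
    set Pm : H →L[ℂ] M := M.orthogonalProjectionOnto with hPm_def
    set Q : H →L[ℂ] H := M.subtypeL ∘L Pm with hQ_def
    have hQapp : ∀ y : H, Q y = ((Pm y : M) : H) := fun y => rfl
    have hQmem : ∀ y : H, y ∈ M → Q y = y := by
      intro y hy
      rw [hQapp, hPm_def]
      exact congrArg _ (Submodule.orthogonalProjectionOnto_mem_subspace_eq_self (⟨y, hy⟩ : M))
    have hQM : ∀ y : H, Q y ∈ M := fun y => (Pm y).2
    have hQQ : Q * Q = Q := by
      ext y
      exact hQmem _ (hQM y)
    have hQsa : IsSelfAdjoint Q := isSelfAdjoint_starProjection M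
    have hQx : Q * x = x := by
      ext y
      exact hQmem _ (hxM y)
    have hψQne : ψ Q ≠ 0 := by
      intro h0
      apply hfψ
      rw [← hQx, map_mul, h0, zero_mul]
    -- (RA * k) is the identity on M
    have hRkM : ∀ y ∈ M, (RA * k) y = y := by
      intro y hy
      have hclosed : IsClosed {y : H | (RA * k) y = y} :=
        isClosed_eq (RA * k).continuous continuous_id
      have hsub : (NN : Set H) ⊆ {y : H | (RA * k) y = y} := by
        rintro _ ⟨y, rfl⟩
        show (RA * k) (x y) = x y
        rw [← ContinuousLinearMap.mul_apply, hRkx]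
      have hsub2 : (M : Set H) ⊆ {y : H | (RA * k) y = y} := by
        rw [hM_def, Submodule.topologicalClosure_coe]
        exact closure_minimal hsub hclosed
      exact hsub2 hy
    have hRkQ : (RA * k) * Q = Q := by
      ext y
      exact hRkM _ (hQM y)
    -- Q * (k * RA) = Q
    set zop : H →L[ℂ] H := k * RA - 1 with hzop_def
    have hzop_sa : IsSelfAdjoint zop := by
      have h1 : IsSelfAdjoint (k * RA) := by
        rw [hkR]
        exact cfc_predicate _ k
      exact h1.sub (show star (1 : H →L[ℂ] H) = 1 from star_one _)
    have hzopx : zop * x = 0 := by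
      rw [hzop_def, sub_mul, one_mul, hkRx, sub_self]
    have hzopM : ∀ y ∈ M, zop y = 0 := by
      intro y hy
      have hclosed : IsClosed {y : H | zop y = 0} :=
        isClosed_eq zop.continuous continuous_const
      have hsub : (NN : Set H) ⊆ {y : H | zop y = 0} := by
        rintro _ ⟨y, rfl⟩
        show zop (x y) = 0
        rw [← ContinuousLinearMap.mul_apply, hzopx]
        rfl
      have hsub2 : (M : Set H) ⊆ {y : H | zop y = 0} := by
        rw [hM_def, Submodule.topologicalClosure_coe]
        exact closure_minimal hsub hclosed
      exact hsub2 hy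
    have hQzop : Q * zop = 0 := by
      ext y
      show Q (zop y) = 0
      have hyperp : zop y ∈ Mᗮ := by
        rw [Submodule.mem_orthogonal]
        intro u hu
        have hsym := hzop_sa.isSymmetric
        have h1 : ⟪zop u, y⟫ = ⟪u, zop y⟫ := hsym u y
        rw [← h1, hzopM u hu, inner_zero_left]
      rw [hQapp, hPm_def, Submodule.orthogonalProjectionOnto_apply_of_mem_orthogonal hyperp]
      rfl
    have hQkR : Q * (k * RA) = Q := by
      have h1 : Q * (k * RA) - Q = Q * zop := by rw [hzop_def]; noncomm_ring
      rw [hQzop] at h1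
      exact sub_eq_zero.mp h1
    -- the corner identity and the character β
    have hQbQ : ∀ b : H →L[ℂ] H, Q * b * Q = RA * (k * (Q * b * Q) * k) * RA := by
      intro b
      calc Q * b * Q = ((RA * k) * Q) * b * (Q * (k * RA)) := by rw [hRkQ, hQkR]
        _ = RA * (k * (Q * b * Q) * k) * RA := by noncomm_ring
    set GG : Y →L[ℂ] Y := ψ RA * V * ψ RA with hGG_def
    have hψQbQ : ∀ b : H →L[ℂ] H,
        ψ (Q * b * Q) = gg ((Ep * Zi * ψ (Q * b * Q)) y₀) • GG := by
      intro b
      conv_lhs => rw [hQbQ b]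
      rw [map_mul, map_mul, hcorner (Q * b * Q), mul_smul_comm, smul_mul_assoc, hGG_def,
        mul_assoc]
    set c1 : ℂ := gg ((Ep * Zi * ψ Q) y₀) with hc1_def
    have hQ1Q : Q * 1 * Q = Q := by rw [mul_one, hQQ]
    have hc1 : ψ Q = c1 • GG := by
      have h1 := hψQbQ 1
      rwa [hQ1Q, ← hc1_def] at h1
    have hc1ne : c1 ≠ 0 := by
      intro h0
      apply hψQne
      rw [hc1, h0, zero_smul]
    have hGGQ : GG = c1⁻¹ • ψ Q := by
      rw [hc1, smul_smul, inv_mul_cancel₀ hc1ne, one_smul]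
    set β : (H →L[ℂ] H) → ℂ := fun b => gg ((Ep * Zi * ψ (Q * b * Q)) y₀) * c1⁻¹ with hβ_def
    have hβ : ∀ b : H →L[ℂ] H, ψ (Q * b * Q) = β b • ψ Q := by
      intro b
      rw [hψQbQ b, hGGQ, smul_smul, hβ_def]
    have hsmul_cancel : ∀ c c' : ℂ, c • ψ Q = c' • ψ Q → c = c' := by
      intro c c' hcc
      have h1 : (c - c') • ψ Q = 0 := by rw [sub_smul, hcc, sub_self]
      rcases smul_eq_zero.mp h1 with h | h
      · exact sub_eq_zero.mp h
      · exact absurd h hψQne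
    have hβmul : ∀ b c : H →L[ℂ] H, β (b * Q * c) = β b * β c := by
      intro b c
      have h1 : (Q * b * Q) * (Q * c * Q) = Q * (b * Q * c) * Q := by
        calc (Q * b * Q) * (Q * c * Q) = Q * b * (Q * Q) * c * Q := by noncomm_ring
          _ = Q * b * Q * c * Q := by rw [hQQ]
          _ = Q * (b * Q * c) * Q := by noncomm_ring
      apply hsmul_cancel
      rw [← hβ (b * Q * c), ← h1, map_mul, hβ b, hβ c, smul_mul_assoc, mul_smul_comm, smul_smul,
        ← map_mul, hQQ]
    have hβQ : β Q = 1 := by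
      apply hsmul_cancel
      have h1 : Q * Q * Q = Q := by rw [hQQ, hQQ]
      rw [← hβ Q, h1, one_smul]
    have hβ0 : β (0 : H →L[ℂ] H) = 0 := by
      apply hsmul_cancel
      have h1 : Q * (0 : H →L[ℂ] H) * Q = 0 := by rw [mul_zero, zero_mul]
      rw [← hβ 0, h1, map_zero, zero_smul]
    -- M is infinite dimensional
    have hMinf : ¬ FiniteDimensional ℂ ↥M := by
      intro hfd
      apply hψQne
      set bfin := stdOrthonormalBasis ℂ (↥M) with hbfin_def
      have hQsum : Q = ∑ i, ((innerSL ℂ ((bfin i : H))).smulRight ((bfin i : H))) := by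
        ext y
        rw [hQapp, hPm_def, bfin.orthogonalProjectionOnto_apply_eq_sum]
        simp only [Submodule.coe_sum, Submodule.coe_smul, ContinuousLinearMap.sum_apply,
          ContinuousLinearMap.smulRight_apply, innerSL_apply_apply]
      rw [hQsum, map_sum]
      exact Finset.sum_eq_zero fun i _ => hrank1 _
    -- a Hilbert basis of M with infinite index set
    obtain ⟨wset, bb, hbb⟩ := exists_hilbertBasis ℂ (↥M)
    haveI hwinf : Infinite ↥wset := by
      by_contra hfin
      haveI : Finite ↥wset := not_infinite_iff_finite.mp hfin
      haveI : Fintype ↥wset := Fintype.ofFinite _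
      apply hMinf
      have hadd : ∀ m m' : ↥M, (fun i => bb.repr (m + m') i) =
          (fun i => bb.repr m i + bb.repr m' i) := by
        intro m m'
        funext i
        rw [map_add, lp.coeFn_add, Pi.add_apply]
      have hsmul : ∀ (c : ℂ) (m : ↥M), (fun i => bb.repr (c • m) i) =
          (fun i => c * bb.repr m i) := by
        intro c m
        funext i
        rw [map_smul, lp.coeFn_smul, Pi.smul_apply, smul_eq_mul]
      set jl : ↥M →ₗ[ℂ] (↥wset → ℂ) :=
        { toFun := fun m i => bb.repr m i
          map_add' := hadd
          map_smul' := hsmul } with hjl_def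
      have hinj : Function.Injective jl := by
        intro m m' hmm'
        have h1 : (bb.repr m : ↥wset → ℂ) = (bb.repr m' : ↥wset → ℂ) := by
          funext i
          exact congrFun hmm' i
        exact bb.repr.injective (lp.ext h1)
      exact FiniteDimensional.of_injective jl hinj
    have hcard : Nonempty ((↥wset ⊕ ↥wset) ≃ ↥wset) := by
      rw [← Cardinal.eq, ← Cardinal.add_def]
      exact Cardinal.add_mk_eq_max.trans (max_self _)
    obtain ⟨eqv⟩ := hcard
    set j1 : ↥wset → ↥wset := fun i => eqv (Sum.inl i) with hj1_def
    set j2 : ↥wset → ↥wset := fun i => eqv (Sum.inr i) with hj2_def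
    have hj1inj : Function.Injective j1 := fun a b hab => Sum.inl_injective (eqv.injective hab)
    have hj2inj : Function.Injective j2 := fun a b hab => Sum.inr_injective (eqv.injective hab)
    have hj12 : ∀ i i', j1 i ≠ j2 i' := by
      intro i i' hc
      exact Sum.inl_ne_inr (eqv.injective hc)
    set v1 : ↥wset → ↥M := fun i => bb (j1 i) with hv1_def
    set v2 : ↥wset → ↥M := fun i => bb (j2 i) with hv2_def
    have hv1 : Orthonormal ℂ v1 := bb.orthonormal.comp j1 hj1inj
    have hv2 : Orthonormal ℂ v2 := bb.orthonormal.comp j2 hj2inj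
    -- the range of the isometry induced by an orthonormal family
    have hrange : ∀ (vv : ↥wset → ↥M) (hvv : Orthonormal ℂ vv) (F : lp (fun _ : ↥wset => ℂ) 2),
        hvv.orthogonalFamily.linearIsometry F ∈
          (Submodule.span ℂ (Set.range vv)).topologicalClosure := by
      intro vv hvv F
      have h1 : hvv.orthogonalFamily.linearIsometry F ∈
          LinearMap.range hvv.orthogonalFamily.linearIsometry.toLinearMap :=
        LinearMap.mem_range_self _ _
      rw [hvv.orthogonalFamily.range_linearIsometry] at h1
      refine Submodule.topologicalClosure_mono ?_ h1
      apply iSup_le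
      intro i
      rw [LinearIsometry.coe_toSpanSingleton, ← LinearMap.span_singleton_eq_range]
      exact Submodule.span_mono (Set.singleton_subset_iff.mpr ⟨i, rfl⟩)
    -- mutual orthogonality of the two closures
    have horthoMM : ∀ a1 a2 : ↥M,
        a1 ∈ (Submodule.span ℂ (Set.range v1)).topologicalClosure →
        a2 ∈ (Submodule.span ℂ (Set.range v2)).topologicalClosure →
        (inner ℂ a1 a2 : ℂ) = 0 := by
      have hsp : Submodule.span ℂ (Set.range v1) ⟂ Submodule.span ℂ (Set.range v2) := by
        rw [Submodule.isOrtho_span]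
        rintro _ ⟨i, rfl⟩ _ ⟨i', rfl⟩
        exact bb.orthonormal.2 (hj12 i i')
      have h2 : (Submodule.span ℂ (Set.range v1)).topologicalClosure ≤
          (Submodule.span ℂ (Set.range v2))ᗮ :=
        Submodule.topologicalClosure_minimal _ hsp.le (Submodule.isClosed_orthogonal _)
      intro a1 a2 ha1 ha2
      have ha1' : a1 ∈ (Submodule.span ℂ (Set.range v2))ᗮ := h2 ha1
      have hset : (↑(Submodule.span ℂ (Set.range v2)) : Set ↥M) ⊆
          {y : ↥M | (inner ℂ a1 y : ℂ) = 0} := fun u hu =>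
        Submodule.inner_left_of_mem_orthogonal hu ha1'
      have hclosed : IsClosed {y : ↥M | (inner ℂ a1 y : ℂ) = 0} :=
        isClosed_eq (Continuous.inner continuous_const continuous_id) continuous_const
      have hsub := closure_minimal hset hclosed
      have ha2' : a2 ∈ closure (↑(Submodule.span ℂ (Set.range v2)) : Set ↥M) := by
        rw [← Submodule.topologicalClosure_coe]
        exact ha2
      exact hsub ha2'
    -- the two isometries of M and the operators W1, W2 on H
    set S1 : ↥M →ₗᵢ[ℂ] ↥M :=
      hv1.orthogonalFamily.linearIsometry.comp bb.repr.toLinearIsometry with hS1_def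
    set S2 : ↥M →ₗᵢ[ℂ] ↥M :=
      hv2.orthogonalFamily.linearIsometry.comp bb.repr.toLinearIsometry with hS2_def
    have hS1mem : ∀ m : ↥M, S1 m ∈ (Submodule.span ℂ (Set.range v1)).topologicalClosure :=
      fun m => hrange v1 hv1 (bb.repr m)
    have hS2mem : ∀ m : ↥M, S2 m ∈ (Submodule.span ℂ (Set.range v2)).topologicalClosure :=
      fun m => hrange v2 hv2 (bb.repr m)
    set W1 : H →L[ℂ] H := M.subtypeL ∘L (S1.toContinuousLinearMap ∘L Pm) with hW1_def
    set W2 : H →L[ℂ] H := M.subtypeL ∘L (S2.toContinuousLinearMap ∘L Pm) with hW2_def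
    have hW1app : ∀ y : H, W1 y = ((S1 (Pm y) : ↥M) : H) := fun y => rfl
    have hW2app : ∀ y : H, W2 y = ((S2 (Pm y) : ↥M) : H) := fun y => rfl
    -- inner product identities
    have hPQinner : ∀ y y' : H, (inner ℂ (Pm y) (Pm y') : ℂ) = ⟪Q y, y'⟫ := by
      intro y y'
      have horth : y' - ((Pm y' : ↥M) : H) ∈ Mᗮ := Submodule.sub_starProjection_mem_orthogonal y'
      have h0 : ⟪Q y, y' - ((Pm y' : ↥M) : H)⟫ = 0 :=
        (Submodule.mem_orthogonal M _).mp horth (Q y) (hQM y)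
      have h1 : ⟪Q y, y'⟫ = ⟪Q y, ((Pm y' : ↥M) : H)⟫ + ⟪Q y, y' - ((Pm y' : ↥M) : H)⟫ := by
        rw [← inner_add_right]
        congr 1
        abel
      rw [h1, h0, add_zero, hQapp]
      rfl
    have hWW : ∀ (W : H →L[ℂ] H) (S : ↥M →ₗᵢ[ℂ] ↥M),
        (∀ y : H, W y = ((S (Pm y) : ↥M) : H)) → star W * W = Q := by
      intro W S hWapp
      ext y
      apply ext_inner_right ℂ
      intro y'
      have h1 : ⟪(star W * W) y, y'⟫ = ⟪W y, W y'⟫ := by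
        show ⟪(adjoint W) (W y), y'⟫ = _
        rw [adjoint_inner_left]
      rw [h1, hWapp y, hWapp y']
      have h2 : ⟪((S (Pm y) : ↥M) : H), ((S (Pm y') : ↥M) : H)⟫ =
          (inner ℂ (S (Pm y)) (S (Pm y')) : ℂ) := rfl
      rw [h2, S.inner_map_map, hPQinner]
    have hWWQ1 : star W1 * W1 = Q := hWW W1 S1 hW1app
    have hWWQ2 : star W2 * W2 = Q := hWW W2 S2 hW2app
    have hW12 : star W1 * W2 = 0 := by
      ext y
      apply ext_inner_right ℂ
      intro y'
      have h1 : ⟪(star W1 * W2) y, y'⟫ = ⟪W2 y, W1 y'⟫ := by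
        show ⟪(adjoint W1) (W2 y), y'⟫ = _
        rw [adjoint_inner_left]
      have h2 : (inner ℂ (S1 (Pm y')) (S2 (Pm y)) : ℂ) = 0 :=
        horthoMM _ _ (hS1mem (Pm y')) (hS2mem (Pm y))
      have h3 : ⟪W2 y, W1 y'⟫ = 0 := by
        rw [hW2app, hW1app]
        have h4 : ⟪((S2 (Pm y) : ↥M) : H), ((S1 (Pm y') : ↥M) : H)⟫ =
            (inner ℂ (S2 (Pm y)) (S1 (Pm y')) : ℂ) := rfl
        rw [h4, inner_eq_zero_symm]
        exact h2
      rw [h1, h3]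
      simp
    have hQW1 : Q * W1 = W1 := by
      ext y
      exact hQmem _ (S1 (Pm y)).2
    have hQW2 : Q * W2 = W2 := by
      ext y
      exact hQmem _ (S2 (Pm y)).2
    have hPmQ : ∀ y : H, Pm (Q y) = Pm y := by
      intro y
      rw [hQapp, hPm_def]
      exact Submodule.orthogonalProjectionOnto_mem_subspace_eq_self (Pm y)
    have hW1Q : W1 * Q = W1 := by
      ext y
      show W1 (Q y) = W1 y
      rw [hW1app, hW1app, hPmQ]
    have hW2Q : W2 * Q = W2 := by
      ext y
      show W2 (Q y) = W2 y
      rw [hW2app, hW2app, hPmQ]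
    -- star identities from selfadjointness of Q
    have hQW' : ∀ W : H →L[ℂ] H, Q * W = W → star W * Q = star W := by
      intro W hQW
      have h1 := congrArg star hQW
      rwa [star_mul, hQsa.star_eq] at h1
    have hWQ' : ∀ W : H →L[ℂ] H, W * Q = W → Q * star W = star W := by
      intro W hWQ
      have h1 := congrArg star hWQ
      rwa [star_mul, hQsa.star_eq] at h1
    -- β of the range projections is 1
    have hβW : ∀ W : H →L[ℂ] H, Q * W = W → W * Q = W → star W * W = Q →
        β (W * star W) = 1 := by
      intro W h1 h2 h3
      have e1 : star W * Q * W = Q := by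
        rw [hQW' W h1, h3]
      have e2 : β Q = β (star W) * β W := by
        rw [← e1]
        exact hβmul (star W) W
      have e3 : β (star W) * β W = 1 := by rw [← e2, hβQ]
      have e4 : W * Q * star W = W * star W := by
        rw [mul_assoc, hWQ' W h2]
      calc β (W * star W) = β (W * Q * star W) := by rw [e4]
        _ = β W * β (star W) := hβmul W (star W)
        _ = 1 := by rw [mul_comm]; exact e3
    have hβ1 : β (W1 * star W1) = 1 := hβW W1 hQW1 hW1Q hWWQ1
    have hβ2 : β (W2 * star W2) = 1 := hβW W2 hQW2 hW2Q hWWQ2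
    -- the final contradiction
    have hzero : (W1 * star W1) * Q * (W2 * star W2) = 0 := by
      have h1 : star W1 * Q = star W1 := hQW' W1 hQW1
      calc (W1 * star W1) * Q * (W2 * star W2)
          = W1 * (star W1 * Q) * (W2 * star W2) := by noncomm_ring
        _ = W1 * star W1 * (W2 * star W2) := by rw [h1]
        _ = W1 * (star W1 * W2) * star W2 := by noncomm_ring
        _ = 0 := by rw [hW12, mul_zero, zero_mul]
    have hcontra : (1 : ℂ) = 0 := by
      calc (1 : ℂ) = β (W1 * star W1) * β (W2 * star W2) := by rw [hβ1, hβ2, mul_one]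
        _ = β ((W1 * star W1) * Q * (W2 * star W2)) := (hβmul _ _).symm
        _ = 0 := by rw [hzero, hβ0]
    exact one_ne_zero hcontra
  · -- Case B: every upper spectral part of k is killed by ψ; conclude ψ k = 0
    push_neg at hA
    set θ : ℝ → ℝ := fun t => max 0 (min 1 (2 - 8 * t)) with hθ_def
    have hθc : Continuous θ :=
      continuous_const.max (continuous_const.min
        (continuous_const.sub (continuous_const.mul continuous_id)))
    have hθ1 : ∀ t : ℝ, t ≤ (8 : ℝ)⁻¹ → θ t = 1 := by
      intro t ht
      have h1 : (1 : ℝ) ≤ 2 - 8 * t := by nlinarith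
      simp only [hθ_def]
      rw [min_eq_left h1, max_eq_right zero_le_one]
    have hτc : Continuous (fun t : ℝ => t * (1 - θ t)) :=
      continuous_id.mul (continuous_const.sub hθc)
    have hτ0 : ∀ t : ℝ, t ≤ (8 : ℝ)⁻¹ → t * (1 - θ t) = 0 := by
      intro t ht
      rw [hθ1 t ht]
      ring
    have hψτ : ψ (cfc (fun t : ℝ => t * (1 - θ t)) k) = 0 := hA _ hτc hτ0
    set uf : ℝ → ℝ := fun t => (1 - min t 2⁻¹)⁻¹ with huf_def
    have hden : ∀ t : ℝ, 1 - min t 2⁻¹ ≠ 0 := by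
      intro t
      have : min t 2⁻¹ ≤ 2⁻¹ := min_le_right _ _
      intro hc
      nlinarith
    have hufc : Continuous uf :=
      (continuous_const.sub (continuous_id.min continuous_const)).inv₀ hden
    have hgBc : Continuous (fun t : ℝ => θ t * uf t) := hθc.mul hufc
    have hpoint : ∀ t : ℝ, t * θ t = (t - t * t) * (θ t * uf t) := by
      intro t
      by_cases hc : θ t = 0
      · rw [hc]; ring
      · have ht4 : t < 4⁻¹ := by
          by_contra hge
          push_neg at hge
          apply hc
          rw [hθ_def]
          have h1 : 2 - 8 * t ≤ 0 := by nlinarith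
          have h2 : min 1 (2 - 8 * t) = 2 - 8 * t := min_eq_right (by linarith)
          simp only [h2]
          exact max_eq_left h1
        have hmin : min t 2⁻¹ = t := min_eq_left (by norm_num; linarith)
        have h1t : (1 : ℝ) - t ≠ 0 := by norm_num at ht4 ⊢; nlinarith
        rw [huf_def]
        simp only [hmin]
        field_simp
    have hk_eq : k = cfc (fun t : ℝ => t * (1 - θ t)) k + cfc (fun t : ℝ => t * θ t) k := by
      have hg' : ContinuousOn (fun t : ℝ => t * θ t) (spectrum ℝ k) :=
        Continuous.continuousOn (by exact continuous_id.mul hθc)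
      conv_lhs => rw [← cfc_id ℝ k]
      rw [← cfc_add k _ _ (hτc.continuousOn) hg']
      apply cfc_congr
      intro t _
      simp
      ring
    have hfac : cfc (fun t : ℝ => t * θ t) k = (k - k * k) * cfc (fun t => θ t * uf t) k := by
      rw [show (fun t : ℝ => t * θ t) = fun t => (t - t * t) * (θ t * uf t) from funext hpoint]
      have hsub' : ContinuousOn (fun t : ℝ => t - t * t) (spectrum ℝ k) :=
        Continuous.continuousOn (by exact continuous_id.sub (continuous_id.mul continuous_id))
      rw [cfc_mul _ _ k hsub' (hgBc.continuousOn)]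
      congr 1
      have h1 : cfc (fun t : ℝ => t - t * t) k =
          cfc (fun t : ℝ => t) k - cfc (fun t : ℝ => t * t) k :=
        cfc_sub _ _ k (Continuous.continuousOn (by exact continuous_id))
          (Continuous.continuousOn (by exact continuous_id.mul continuous_id))
      have h2 : cfc (fun t : ℝ => t * t) k = k * k := by
        rw [cfc_mul (fun t : ℝ => t) (fun t : ℝ => t) k
          (Continuous.continuousOn (by exact continuous_id))
          (Continuous.continuousOn (by exact continuous_id)), cfc_id' ℝ k]
      rw [h1, h2, cfc_id' ℝ k]
    have hzero : ψ k = 0 := by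
      rw [hk_eq, map_add, hψτ, zero_add, hfac, map_mul, map_sub, map_mul, hψk, hVsq]
      rw [sub_self, zero_mul]
    rw [hψk] at hzero
    exact hVne hzero

end HilbertSHAI

end

open Function

/-- Every complex Hilbert space `H` (of arbitrary density character) has the
SHAI property: for every nonzero Banach space `Y`, every surjective algebra homomorphism
`ψ : B(H) → B(Y)` is injective. -/
theorem hilbert_shai
    {H : Type*} [NormedAddCommGroup H] [InnerProductSpace ℂ H] [CompleteSpace H] :
    ∀ (Y : Type u) [NormedAddCommGroup Y] [NormedSpace ℂ Y] [CompleteSpace Y],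
      Nontrivial Y →
        ∀ ψ : (H →L[ℂ] H) →ₐ[ℂ] (Y →L[ℂ] Y), Surjective ψ → Injective ψ := by
  intro Y _ _ _ hY ψ hsurj
  exact HilbertSHAI.main hY ψ hsurj
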